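/- For each of b ∈ {2, 3, 5, 7, 9}, there are infinitely many triangular numbers palindromic in base b. -/

import Mathlib

/-- The n-th triangular number. -/
def tri (n : ℕ) : ℕ := n * (n + 1) / 2

def altL (d : ℕ) : ℕ → List ℕ
  | 0 => [d]
  | k+1 => d :: 0 :: altL d k

def stepN (e : ℕ) : ℕ → ℕ
  | 0 => e
  | k+1 => (2*e+1) * stepN e k + e

lemma stepN_spec (e k : ℕ) : 2 * stepN e k + 1 = (2*e+1)^(k+1) := by
  induction k with
  | zero => simp [stepN]
  | succ k ih => rw [stepN, pow_succ, ← ih]; ring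

lemma getLast_of_palindrome (L : List ℕ) (hL : L.reverse = L) (h : L ≠ [])
    (d : ℕ) (hh : L.head? = some d) : L.getLast h = d := by
  have h1 : L.getLast? = some d := by rw [← List.head?_reverse, hL, hh]
  rw [List.getLast?_eq_getLast h] at h1
  exact Option.some_inj.mp h1

lemma altL_head? (d k : ℕ) : (altL d k).head? = some d := by cases k <;> rfl

lemma altL_append (d k : ℕ) : altL d k ++ [0, d] = d :: 0 :: altL d k := by
  induction k with
  | zero => rfl
  | succ k ih =>
    show d :: 0 :: (altL d k ++ [0, d]) = _
    rw [ih]; rfl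

lemma altL_reverse (d k : ℕ) : (altL d k).reverse = altL d k := by
  induction k with
  | zero => rfl
  | succ k ih =>
    show (d :: 0 :: altL d k).reverse = _
    rw [List.reverse_cons, List.reverse_cons, ih]
    simpa [altL] using altL_append d k

lemma altL_mem (d b : ℕ) (hd : d < b) (hb : 0 < b) (k : ℕ) : ∀ l ∈ altL d k, l < b := by
  induction k with
  | zero => simp [altL, hd]
  | succ k ih =>
    simp only [altL, List.mem_cons]
    rintro l (rfl|rfl|h) <;> [exact hd; exact hb; exact ih l h]

lemma altL_val (b d k : ℕ) (hsq : 8*d + 1 = b^2) :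
    8 * Nat.ofDigits b (altL d k) + 1 = b^(2*(k+1)) := by
  induction k with
  | zero => simp [altL, Nat.ofDigits, hsq]
  | succ k ih =>
    show 8 * Nat.ofDigits b (d :: 0 :: altL d k) + 1 = _
    rw [Nat.ofDigits_cons, Nat.ofDigits_cons]
    have hb2 : b^(2*(k+1+1)) = b^2 * b^(2*(k+1)) := by rw [← pow_add]; ring_nf
    rw [hb2, ← ih]
    nlinarith [hsq, sq_nonneg b]

lemma tri_eq_of (n m : ℕ) (h : n * (n+1) = 2 * m) : tri n = m := by
  show n * (n+1) / 2 = m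
  omega

lemma odd_family (b d e : ℕ) (hb : 1 < b) (hd : 0 < d) (hdb : d < b)
    (he : b = 2*e+1) (hsq : 8*d + 1 = b^2) :
    {m : ℕ | (∃ n, m = tri n) ∧ (Nat.digits b m).reverse = Nat.digits b m}.Infinite := by
  refine Set.infinite_of_injective_forall_mem
    (f := fun k => Nat.ofDigits b (altL d k)) ?_ ?_
  · apply StrictMono.injective
    apply strictMono_nat_of_lt_succ
    intro k
    have h1 := altL_val b d k hsq
    have h2 := altL_val b d (k+1) hsq
    have : b^(2*(k+1)) < b^(2*(k+1+1)) := by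
      apply Nat.pow_lt_pow_right hb; omega
    omega
  · intro k
    have hdig : Nat.digits b (Nat.ofDigits b (altL d k)) = altL d k := by
      apply Nat.digits_ofDigits b hb _ (altL_mem d b hdb (by omega) k)
      intro h
      rw [getLast_of_palindrome _ (altL_reverse d k) h d (altL_head? d k)]
      omega
    refine ⟨⟨stepN e k, ?_⟩, by rw [hdig]; exact altL_reverse d k⟩
    symm
    apply tri_eq_of
    have h1 := altL_val b d k hsq
    have h2 := stepN_spec e k
    rw [← he] at h2
    have h3 : (2 * stepN e k + 1)^2 = b^(2*(k+1)) := by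
      rw [h2, ← pow_mul]; ring_nf
    nlinarith [h3]

lemma base9_family :
    {m : ℕ | (∃ n, m = tri n) ∧ (Nat.digits 9 m).reverse = Nat.digits 9 m}.Infinite := by
  have hval : ∀ k, 8 * Nat.ofDigits 9 (List.replicate (k+1) 1) + 1 = 9^(k+1) := by
    intro k
    induction k with
    | zero => simp [Nat.ofDigits]
    | succ k ih =>
      rw [List.replicate_succ, Nat.ofDigits_cons, pow_succ]
      rw [show ((9:ℕ)^(k+1)) = 8 * Nat.ofDigits 9 (List.replicate (k+1) 1) + 1 from ih.symm]
      push_cast; ring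
  refine Set.infinite_of_injective_forall_mem
    (f := fun k => Nat.ofDigits 9 (List.replicate (k+1) 1)) ?_ ?_
  · apply StrictMono.injective
    apply strictMono_nat_of_lt_succ
    intro k
    have h1 := hval k
    have h2 := hval (k+1)
    have : (9:ℕ)^(k+1) < 9^(k+1+1) := by
      apply Nat.pow_lt_pow_right (by norm_num); omega
    omega
  · intro k
    have hdig : Nat.digits 9 (Nat.ofDigits 9 (List.replicate (k+1) 1)) = List.replicate (k+1) 1 := by
      apply Nat.digits_ofDigits 9 (by norm_num)
      · intro l hl; rw [List.eq_of_mem_replicate hl]; norm_num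
      · intro h
        rw [List.getLast_replicate]
        norm_num
    refine ⟨⟨stepN 1 k, ?_⟩, by rw [hdig]; exact List.reverse_replicate⟩
    symm
    apply tri_eq_of
    have h1 := hval k
    have h2 := stepN_spec 1 k
    norm_num at h2
    have h3 : (2 * stepN 1 k + 1)^2 = 9^(k+1) := by
      rw [h2, ← pow_mul, mul_comm, pow_mul]
      norm_num
    nlinarith [h3]

def binA (k : ℕ) : List ℕ := 1 :: (List.replicate k 0 ++ [1])

def binL (k : ℕ) : List ℕ := binA k ++ (binA k).reverse

lemma binL_reverse (k : ℕ) : (binL k).reverse = binL k := by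
  unfold binL
  rw [List.reverse_append, List.reverse_reverse]

lemma ofDigits_replicate_zero (b k : ℕ) : Nat.ofDigits b (List.replicate k 0) = 0 := by
  induction k with
  | zero => rfl
  | succ k ih => rw [List.replicate_succ, Nat.ofDigits_cons, ih]; ring

lemma binA_val (k : ℕ) : Nat.ofDigits 2 (binA k) = 1 + 2^(k+1) := by
  unfold binA
  rw [Nat.ofDigits_cons, Nat.ofDigits_append, ofDigits_replicate_zero]
  simp [Nat.ofDigits, pow_succ]
  push_cast; ring

lemma binA_rev_val (k : ℕ) : Nat.ofDigits 2 (binA k).reverse = 2^(k+1) + 1 := by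
  unfold binA
  rw [List.reverse_cons, List.reverse_append, List.reverse_replicate]
  rw [Nat.ofDigits_append, Nat.ofDigits_append, ofDigits_replicate_zero]
  simp [Nat.ofDigits, pow_succ]
  push_cast; ring

lemma binL_val (k : ℕ) : Nat.ofDigits 2 (binL k) = 2^(2*k+3) + 2^(k+2) + 2^(k+1) + 1 := by
  unfold binL
  rw [Nat.ofDigits_append, binA_val, binA_rev_val]
  have hlen : (binA k).length = k + 2 := by simp [binA]
  rw [hlen]
  have e1 : (2:ℕ)^(k+2) = 2 * 2^(k+1) := by rw [pow_succ]; ring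
  have e2 : (2:ℕ)^(2*k+3) = 2^(k+2) * 2^(k+1) := by rw [← pow_add]; ring_nf
  rw [e2, e1]
  ring

lemma binL_mem (k : ℕ) : ∀ l ∈ binL k, l < 2 := by
  intro l hl
  simp only [binL, binA, List.mem_append, List.mem_reverse, List.mem_cons,
    List.mem_replicate, List.mem_nil_iff, or_false] at hl
  omega

lemma binL_head? (k : ℕ) : (binL k).head? = some 1 := by
  simp [binL, binA]

lemma base2_family :
    {m : ℕ | (∃ n, m = tri n) ∧ (Nat.digits 2 m).reverse = Nat.digits 2 m}.Infinite := by
  refine Set.infinite_of_injective_forall_mem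
    (f := fun k => Nat.ofDigits 2 (binL k)) ?_ ?_
  · apply StrictMono.injective
    apply strictMono_nat_of_lt_succ
    intro k
    rw [binL_val, binL_val]
    have h1 : (2:ℕ)^(2*k+3) < 2^(2*(k+1)+3) := Nat.pow_lt_pow_right (by norm_num) (by omega)
    have h2 : (2:ℕ)^(k+2) < 2^(k+1+2) := Nat.pow_lt_pow_right (by norm_num) (by omega)
    have h3 : (2:ℕ)^(k+1) < 2^(k+1+1) := Nat.pow_lt_pow_right (by norm_num) (by omega)
    omega
  · intro k
    have hne : binL k ≠ [] := by simp [binL, binA]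
    have hdig : Nat.digits 2 (Nat.ofDigits 2 (binL k)) = binL k := by
      apply Nat.digits_ofDigits 2 (by norm_num) _ (binL_mem k)
      intro h
      rw [getLast_of_palindrome _ (binL_reverse k) h 1 (binL_head? k)]
      norm_num
    refine ⟨⟨2^(k+2)+1, ?_⟩, by rw [hdig]; exact binL_reverse k⟩
    symm
    apply tri_eq_of
    show (2^(k+2)+1) * (2^(k+2)+1+1) = 2 * Nat.ofDigits 2 (binL k)
    rw [binL_val]
    have e1 : (2:ℕ)^(2*k+3) = 2 * (2^(k+1) * 2^(k+1)) := by rw [← pow_add]; ring_nf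
    have e2 : (2:ℕ)^(k+2) = 2 * 2^(k+1) := by rw [pow_succ]; ring
    rw [e1, e2]
    ring

theorem triangular_palindromes_small_bases :
    ∀ b ∈ ({2, 3, 5, 7, 9} : Set ℕ),
      {m : ℕ | (∃ n, m = tri n) ∧ (Nat.digits b m).reverse = Nat.digits b m}.Infinite := by
  intro b hb
  simp only [Set.mem_insert_iff, Set.mem_singleton_iff] at hb
  rcases hb with rfl | rfl | rfl | rfl | rfl
  · exact base2_family
  · exact odd_family 3 1 1 (by norm_num) (by norm_num) (by norm_num) (by norm_num) (by norm_num)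
  · exact odd_family 5 3 2 (by norm_num) (by norm_num) (by norm_num) (by norm_num) (by norm_num)
  · exact odd_family 7 6 3 (by norm_num) (by norm_num) (by norm_num) (by norm_num) (by norm_num)
  · exact base9_family
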